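/- Let Γ = ⟨α, β⟩ with α, β coprime, 2 ≤ α < β, and let Δ be a Γ-semimodule whose minimal system of generators has at least 2 elements. Then Syz((Syz(Δ))*) is isomorphic to Δ*, i.e. there exists c ∈ ℤ such that Syz((Syz(Δ))*) = c + Δ*. -/

import Mathlib

/-- The numerical semigroup `⟨α, β⟩ = {pα + qβ : p, q ∈ ℕ}`, viewed inside `ℤ`. -/
def Gamma (α β : ℕ) : Set ℤ := {x : ℤ | ∃ p q : ℕ, x = (p : ℤ) * α + (q : ℤ) * β}

/-- The dual `Δ* = {c ∈ ℤ : c + Δ ⊆ ⟨α,β⟩}` of an `⟨α,β⟩`-semimodule. -/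
def dualSet (α β : ℕ) (Δ : Set ℤ) : Set ℤ := {c : ℤ | ∀ x ∈ Δ, c + x ∈ Gamma α β}

/-- The minimal system of generators of an `⟨α,β⟩`-semimodule `Δ`: those `x ∈ Δ`
which cannot be written as `y + γ` with `y ∈ Δ` and `0 ≠ γ ∈ ⟨α,β⟩`. -/
def minGenSet (α β : ℕ) (Δ : Set ℤ) : Set ℤ :=
  {x ∈ Δ | ∀ γ ∈ Gamma α β, γ ≠ 0 → x - γ ∉ Δ}

/-- The syzygy of an `⟨α,β⟩`-semimodule `Δ` with minimal system of generators `E`: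
`Syz(Δ) = ⋃_{i,i' ∈ E, i ≠ i'} ((i + Γ) ∩ (i' + Γ))`. -/
def Syz (α β : ℕ) (Δ : Set ℤ) : Set ℤ :=
  ⋃ i ∈ minGenSet α β Δ, ⋃ j ∈ minGenSet α β Δ, ⋃ (_ : i ≠ j),
    ((fun γ => i + γ) '' Gamma α β) ∩ ((fun γ => j + γ) '' Gamma α β)

namespace SDS

variable {α β : ℕ}

lemma mem_of_coeffs {p q : ℤ} (hp : 0 ≤ p) (hq : 0 ≤ q) :
    p * (α : ℤ) + q * (β : ℤ) ∈ Gamma α β := by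
  refine ⟨p.toNat, q.toNat, ?_⟩
  rw [Int.toNat_of_nonneg hp, Int.toNat_of_nonneg hq]

lemma zero_mem : (0 : ℤ) ∈ Gamma α β := ⟨0, 0, by simp⟩

lemma gamma_nonneg {x : ℤ} (hx : x ∈ Gamma α β) : 0 ≤ x := by
  obtain ⟨p, q, rfl⟩ := hx
  positivity

lemma gamma_add {x y : ℤ} (hx : x ∈ Gamma α β) (hy : y ∈ Gamma α β) :
    x + y ∈ Gamma α β := by
  obtain ⟨p, q, rfl⟩ := hx
  obtain ⟨p', q', rfl⟩ := hy
  exact ⟨p + p', q + q', by push_cast; ring⟩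

lemma isCoprime_cast (hcop : Nat.Coprime α β) : IsCoprime (α : ℤ) (β : ℤ) :=
  Nat.isCoprime_iff_coprime.mpr hcop

/-- The main characterization: `A*β - B*α ∈ Γ ↔ B ≤ β * (A / α)`. -/
lemma mem_gamma_iff (hα : 2 ≤ α) (hcop : Nat.Coprime α β) (A B : ℤ) :
    A * β - B * α ∈ Gamma α β ↔ B ≤ (β : ℤ) * (A / α) := by
  have hα0 : (0:ℤ) < (α:ℤ) := by exact_mod_cast (by omega : 0 < α)
  constructor
  · rintro ⟨p, q, hpq⟩
    have h1 : (A - q) * β = (B + p) * α := by linarith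
    have h2 : (α : ℤ) ∣ (A - q) := by
      refine (isCoprime_cast hcop).dvd_of_dvd_mul_right ⟨B + p, ?_⟩
      linarith
    obtain ⟨k, hk⟩ := h2
    have hBp : B + p = k * β := by nlinarith
    have hq0 : (0:ℤ) ≤ (q:ℤ) := by positivity
    have hp0 : (0:ℤ) ≤ (p:ℤ) := by positivity
    have hA : A = (q:ℤ) + k * α := by linarith
    have hdiv : A / α = (q:ℤ) / α + k := by
      rw [hA]; exact Int.add_mul_ediv_right _ _ (by omega)
    have hq' : 0 ≤ (q:ℤ) / α := Int.ediv_nonneg hq0 (le_of_lt hα0)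
    have hkk : (β:ℤ) * k ≤ (β:ℤ) * (A / α) := by
      apply mul_le_mul_of_nonneg_left _ (by positivity)
      omega
    nlinarith
  · intro hB
    have hk : A = α * (A / α) + A % α := (Int.mul_ediv_add_emod A α).symm
    have hr0 : 0 ≤ A % α := Int.emod_nonneg A (by omega)
    have key : A * β - B * α = ((β:ℤ) * (A / α) - B) * α + (A % α) * β := by
      nth_rewrite 1 [hk]; ring
    rw [key]
    exact mem_of_coeffs (by omega) hr0

/-- existence of canonical coordinates -/
lemma coords_exist (hα : 2 ≤ α) (hcop : Nat.Coprime α β) (z : ℤ) :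
    ∃ s B : ℤ, 0 ≤ s ∧ s < α ∧ z = s * β - B * α := by
  obtain ⟨v, u, huv⟩ := isCoprime_cast (α := α) (β := β) hcop
  have hα0 : (α:ℤ) ≠ 0 := by exact_mod_cast (by omega : α ≠ 0)
  set s := (z * u) % α with hs
  have h1 : 0 ≤ s := Int.emod_nonneg _ hα0
  have h2 : s < α := Int.emod_lt_of_pos _ (by exact_mod_cast (by omega : 0 < α))
  have hdvd : (α:ℤ) ∣ s * β - z := by
    have hsz : s = z * u - α * (z * u / α) := by
      rw [hs, Int.emod_def]
    have huβ : u * (β:ℤ) = 1 - v * α := by linarith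
    refine ⟨(z * u / α) * (-(β:ℤ)) + (-(z * v)), ?_⟩
    rw [hsz]
    linear_combination z * huβ
  obtain ⟨B, hB⟩ := hdvd
  exact ⟨s, B, h1, h2, by linarith⟩

/-- symmetry of the semigroup -/
lemma gamma_symm (hα : 2 ≤ α) (hαβ : α < β) (hcop : Nat.Coprime α β) (z : ℤ) :
    z ∈ Gamma α β ↔ ((α:ℤ) * β - α - β - z) ∉ Gamma α β := by
  obtain ⟨s, B, hs0, hsα, rfl⟩ := coords_exist hα hcop z
  have h1 : (s:ℤ) / α = 0 := Int.ediv_eq_zero_of_lt hs0 hsα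
  have hfz : (α:ℤ) * β - α - β - (s * β - B * α) = ((α:ℤ) - 1 - s) * β - (1 - B) * α := by ring
  have h2 : ((α:ℤ) - 1 - s) / α = 0 := Int.ediv_eq_zero_of_lt (by omega) (by omega)
  rw [hfz, mem_gamma_iff hα hcop, mem_gamma_iff hα hcop, h1, h2]
  have hβ0 : (0:ℤ) < (β:ℤ) := by exact_mod_cast (by omega : 0 < β)
  constructor
  · intro h h'; nlinarith
  · intro h; nlinarith [h]

lemma F_not_mem (hα : 2 ≤ α) (hαβ : α < β) (hcop : Nat.Coprime α β) :
    ((α:ℤ) * β - α - β) ∉ Gamma α β := by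
  intro h
  exact ((gamma_symm hα hαβ hcop _).mp h) (by simpa using zero_mem (α := α) (β := β))

end SDS

namespace SDS

variable {α β : ℕ}

lemma alpha_mem : ((α:ℕ) : ℤ) ∈ Gamma α β := ⟨1, 0, by simp⟩
lemma beta_mem : ((β:ℕ) : ℤ) ∈ Gamma α β := ⟨0, 1, by simp⟩

lemma gamma_pos {x : ℤ} (hx : x ∈ Gamma α β) (h0 : x ≠ 0) : 0 < x :=
  lt_of_le_of_ne (gamma_nonneg hx) (Ne.symm h0)

/-- pointwise description of the dual via symmetry -/
lemma mem_dual_iff (hα : 2 ≤ α) (hαβ : α < β) (hcop : Nat.Coprime α β) {X : Set ℤ}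
    (hcl : ∀ x ∈ X, ∀ γ ∈ Gamma α β, x + γ ∈ X) (z : ℤ) :
    z ∈ dualSet α β X ↔ ((α:ℤ) * β - α - β - z) ∉ X := by
  constructor
  · intro hz hFz
    have := hz _ hFz
    have h2 : z + ((α:ℤ) * β - α - β - z) = (α:ℤ)*β - α - β := by ring
    rw [h2] at this
    exact F_not_mem hα hαβ hcop this
  · intro hFz x hx
    by_contra hzx
    have h1 : ((α:ℤ)*β - α - β - (z + x)) ∈ Gamma α β := by
      by_contra h2
      exact hzx ((gamma_symm hα hαβ hcop (z+x)).mpr h2)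
    have := hcl x hx _ h1
    have h3 : x + ((α:ℤ)*β - α - β - (z + x)) = (α:ℤ)*β - α - β - z := by ring
    rw [h3] at this
    exact hFz this

lemma dual_closed {X : Set ℤ} :
    ∀ x ∈ dualSet α β X, ∀ γ ∈ Gamma α β, x + γ ∈ dualSet α β X := by
  intro c hc γ hγ x hx
  have := hc x hx
  have h : c + γ + x = (c + x) + γ := by ring
  rw [h]
  exact gamma_add this hγ

lemma dual_dual (hα : 2 ≤ α) (hαβ : α < β) (hcop : Nat.Coprime α β) {X : Set ℤ}
    (hcl : ∀ x ∈ X, ∀ γ ∈ Gamma α β, x + γ ∈ X) :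
    dualSet α β (dualSet α β X) = X := by
  ext z
  rw [mem_dual_iff hα hαβ hcop dual_closed z,
    mem_dual_iff hα hαβ hcop hcl, not_not]
  have h : (α:ℤ)*β - α - β - ((α:ℤ)*β - α - β - z) = z := by ring
  rw [h]

lemma mem_syz_iff {Δ : Set ℤ} (z : ℤ) :
    z ∈ Syz α β Δ ↔ ∃ i ∈ minGenSet α β Δ, ∃ j ∈ minGenSet α β Δ,
      i ≠ j ∧ z - i ∈ Gamma α β ∧ z - j ∈ Gamma α β := by
  simp only [Syz, Set.mem_iUnion, Set.mem_inter_iff, Set.mem_image]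
  constructor
  · rintro ⟨i, hi, j, hj, hij, ⟨γ, hγ, hγz⟩, ⟨γ', hγ', hγz'⟩⟩
    exact ⟨i, hi, j, hj, hij, by rw [← hγz]; simpa using hγ, by rw [← hγz']; simpa using hγ'⟩
  · rintro ⟨i, hi, j, hj, hij, h1, h2⟩
    exact ⟨i, hi, j, hj, hij, ⟨z - i, h1, by ring⟩, ⟨z - j, h2, by ring⟩⟩

lemma syz_closed {Δ : Set ℤ} :
    ∀ x ∈ Syz α β Δ, ∀ γ ∈ Gamma α β, x + γ ∈ Syz α β Δ := by
  intro x hx γ hγ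
  rw [mem_syz_iff] at hx ⊢
  obtain ⟨i, hi, j, hj, hij, h1, h2⟩ := hx
  refine ⟨i, hi, j, hj, hij, ?_, ?_⟩
  · have : x + γ - i = (x - i) + γ := by ring
    rw [this]; exact gamma_add h1 hγ
  · have : x + γ - j = (x - j) + γ := by ring
    rw [this]; exact gamma_add h2 hγ

lemma minGen_antichain {X : Set ℤ} {x y : ℤ} (hx : x ∈ minGenSet α β X)
    (hy : y ∈ minGenSet α β X) (hxy : x - y ∈ Gamma α β) : x = y := by
  by_contra hne
  have h0 : x - y ≠ 0 := by intro h; exact hne (by linarith [sub_eq_zero.mp h])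
  have := hx.2 (x - y) hxy h0
  simp only [sub_sub_cancel] at this
  exact this hy.1

/-- every element of a bounded-below semimodule lies above a minimal generator -/
lemma exists_minGen (hα : 2 ≤ α) {X : Set ℤ} {m : ℤ} (hm : ∀ x ∈ X, m ≤ x) :
    ∀ x ∈ X, ∃ g ∈ minGenSet α β X, x - g ∈ Gamma α β := by
  suffices H : ∀ N : ℕ, ∀ x ∈ X, (x - m).toNat = N → ∃ g ∈ minGenSet α β X, x - g ∈ Gamma α β by
    intro x hx; exact H _ x hx rfl
  intro N
  induction N using Nat.strong_induction_on with
  | _ N IH =>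
    intro x hx hN
    by_cases hmin : x ∈ minGenSet α β X
    · exact ⟨x, hmin, by simpa using zero_mem (α := α) (β := β)⟩
    · have : ∃ γ ∈ Gamma α β, γ ≠ 0 ∧ x - γ ∈ X := by
        by_contra h
        push_neg at h
        exact hmin ⟨hx, fun γ hγ hγ0 => h γ hγ hγ0⟩
      obtain ⟨γ, hγ, hγ0, hxγ⟩ := this
      have hγpos : 0 < γ := gamma_pos hγ hγ0
      have hlt : (x - γ - m).toNat < N := by
        have h1 : m ≤ x - γ := hm _ hxγ
        have h2 : m ≤ x := hm _ hx
        omega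
      obtain ⟨g, hg, hgγ⟩ := IH _ hlt (x - γ) hxγ rfl
      refine ⟨g, hg, ?_⟩
      have : x - g = (x - γ - g) + γ := by ring
      rw [this]; exact gamma_add hgγ hγ

end SDS

namespace SDS

variable {α β : ℕ}

lemma ediv_neg_one (hα : 2 ≤ α) {t : ℤ} (h1 : -(α:ℤ) ≤ t) (h2 : t < 0) :
    t / (α:ℤ) = -1 := by
  have h := (Int.ediv_emod_unique (a := t) (b := (α:ℤ)) (r := t + α) (q := -1)
    (by exact_mod_cast (by omega : 0 < α))).mpr ⟨by ring, by omega, by omega⟩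
  exact h.1

/-- iterated quasi-periodicity -/
lemma qper_iter {n : ℕ} {A : ℤ → ℤ} {c : ℤ} (hq : ∀ j, A (j + (n:ℤ)) = A j + c) :
    ∀ k : ℤ, ∀ j, A (j + k * n) = A j + k * c := by
  intro k
  induction k using Int.induction_on with
  | zero => simp
  | succ k ih =>
    intro j
    have h1 : j + ((k:ℤ) + 1) * n = (j + k * n) + n := by ring
    rw [h1, hq, ih]; ring
  | pred k ih =>
    intro j
    have h2 : j + (-(k:ℤ) - 1) * n + n = j + (-(k:ℤ)) * n := by ring
    have h3 := hq (j + (-(k:ℤ) - 1) * n)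
    rw [h2] at h3
    have h4 := ih j
    rw [h3] at h4
    linarith

/-- reduction of an index into a window of length n -/
lemma window_reduce {n : ℕ} (hn : 0 < n) (i j : ℤ) :
    ∃ k : ℤ, i ≤ j + k * n ∧ j + k * n < i + n := by
  have hn0 : (0:ℤ) < (n:ℤ) := by exact_mod_cast hn
  refine ⟨(i - j + n - 1) / n, ?_, ?_⟩
  · have h1 := Int.mul_ediv_add_emod (i - j + n - 1) n
    have h2 : 0 ≤ (i - j + n - 1) % n := Int.emod_nonneg _ (by omega)
    have h3 : (i - j + n - 1) % n < n := Int.emod_lt_of_pos _ hn0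
    nlinarith [h1]
  · have h1 := Int.mul_ediv_add_emod (i - j + n - 1) n
    have h2 : 0 ≤ (i - j + n - 1) % n := Int.emod_nonneg _ (by omega)
    nlinarith [h1]

section KeyCtx

variable (hα : 2 ≤ α) (hαβ : α < β) (hcop : Nat.Coprime α β)
variable {n : ℕ} (hn : 2 ≤ n)
variable {A B : ℤ → ℤ} (hA : StrictMono A) (hB : StrictMono B)
variable (hAq : ∀ j, A (j + (n:ℤ)) = A j + α) (hBq : ∀ j, B (j + (n:ℤ)) = B j + β)

/-- the generators -/
local notation "XX" => fun j : ℤ => A j * (β:ℤ) - B j * (α:ℤ)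

set_option linter.unusedSectionVars false
set_option linter.unusedVariables false
include hα hαβ hcop hn hA hB hAq hBq

lemma X_per : ∀ k j : ℤ, (XX) (j + k * n) = (XX) j := by
  intro k j
  simp only []
  rw [qper_iter hAq k j, qper_iter hBq k j]; ring

lemma X_window_inj : ∀ i j : ℤ, i < j → j < i + n → (XX) i ≠ (XX) j := by
  intro i j hij hjn heq
  simp only [] at heq
  have h1 : (A j - A i) * β = (B j - B i) * α := by linarith
  have h2 : 0 < A j - A i := by have := hA hij; omega
  have h3 : A j - A i < α := by
    have hj : A j < A (i + n) := hA hjn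
    have := hAq i; omega
  have h4 : (α:ℤ) ∣ (A j - A i) := by
    refine (isCoprime_cast hcop).dvd_of_dvd_mul_right ⟨B j - B i, by linarith⟩
  have := Int.le_of_dvd h2 h4
  omega

lemma X_antichain : ∀ i j : ℤ, (XX) i - (XX) j ∈ Gamma α β → (XX) i = (XX) j := by
  intro i j hmem
  obtain ⟨k, hk1, hk2⟩ := window_reduce (n := n) (by omega) i j
  set j' := j + k * n with hj'
  have hXj : (XX) j' = (XX) j := X_per hα hαβ hcop hn hA hB hAq hBq k j
  rcases eq_or_lt_of_le hk1 with heq | hlt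
  · rw [← hXj, ← heq]
  · exfalso
    rw [← hXj] at hmem
    have hdA1 : A i - A j' < 0 := by have := hA hlt; omega
    have hdA2 : -(α:ℤ) ≤ A i - A j' := by
      have h1 : A i + α = A (i + n) := (hAq i).symm
      have h2 : A j' < A (i + n) := hA hk2
      omega
    have hBj' : B j' < B i + β := by
      have h1 : B i + β = B (i + n) := (hBq i).symm
      have h2 : B j' < B (i + n) := hB hk2
      omega
    have hexp : (XX) i - (XX) j' = (A i - A j') * β - (B i - B j') * α := by
      simp only []; ring
    rw [hexp, mem_gamma_iff hα hcop] at hmem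
    rw [ediv_neg_one hα hdA2 hdA1] at hmem
    have hβ0 : (0:ℤ) ≤ (β:ℤ) := by positivity
    nlinarith [hmem]

lemma minGen_eq_range (Δ : Set ℤ)
    (hΔ : ∀ z, z ∈ Δ ↔ ∃ j : ℤ, z - ((XX) j) ∈ Gamma α β) :
    minGenSet α β Δ = Set.range (XX) := by
  have hXmem : ∀ j : ℤ, (XX) j ∈ Δ := by
    intro j; rw [hΔ]; exact ⟨j, by simpa using zero_mem (α := α) (β := β)⟩
  ext z
  constructor
  · intro hz
    obtain ⟨j, hj⟩ := (hΔ z).mp hz.1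
    rcases eq_or_ne (z - (XX) j) 0 with h0 | h0
    · exact ⟨j, by linarith [sub_eq_zero.mp h0]⟩
    · exfalso
      have := hz.2 (z - (XX) j) hj h0
      simp only [sub_sub_cancel] at this
      exact this (hXmem j)
  · rintro ⟨j, rfl⟩
    refine ⟨hXmem j, ?_⟩
    intro γ hγ hγ0 hmem
    rw [hΔ] at hmem
    obtain ⟨k, hk⟩ := hmem
    have h1 : (XX) j - (XX) k ∈ Gamma α β := by
      have heq : (XX) j - (XX) k = ((XX) j - γ - (XX) k) + γ := by ring
      rw [heq]; exact gamma_add hk hγ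
    have h2 := X_antichain hα hαβ hcop hn hA hB hAq hBq j k h1
    rw [h2] at hk
    have h3 : (XX) k - γ - (XX) k = -γ := by ring
    rw [h3] at hk
    have := gamma_nonneg hk
    have := gamma_pos hγ hγ0
    omega

/-- THE key lemma: explicit description of `dual (Syz Δ)`. -/
lemma key (Δ : Set ℤ)
    (hΔ : ∀ z, z ∈ Δ ↔ ∃ j : ℤ, z - ((XX) j) ∈ Gamma α β) :
    ∀ z, z ∈ dualSet α β (Syz α β Δ) ↔
      ∃ i : ℤ, z - (B (i + (n:ℤ) - 2) * α - A i * β) ∈ Gamma α β := by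
  have hα0 : (0:ℤ) < (α:ℤ) := by exact_mod_cast (by omega : 0 < α)
  have hβ0 : (0:ℤ) ≤ (β:ℤ) := by positivity
  have hn2 : (2:ℤ) ≤ (n:ℤ) := by exact_mod_cast hn
  intro z
  have hminGen := minGen_eq_range hα hαβ hcop hn hA hB hAq hBq Δ hΔ
  have hsyz : ∀ w : ℤ, w ∈ Syz α β Δ ↔
      ∃ i j : ℤ, (XX) i ≠ (XX) j ∧ w - (XX) i ∈ Gamma α β ∧ w - (XX) j ∈ Gamma α β := by
    intro w
    rw [mem_syz_iff, hminGen]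
    constructor
    · rintro ⟨x, ⟨i, rfl⟩, y, ⟨j, rfl⟩, hne, h1, h2⟩; exact ⟨i, j, hne, h1, h2⟩
    · rintro ⟨i, j, hne, h1, h2⟩; exact ⟨_, ⟨i, rfl⟩, _, ⟨j, rfl⟩, hne, h1, h2⟩
  obtain ⟨s, Bz, hs0, hsα, hz⟩ := coords_exist hα hcop z
  set f : ℤ → ℤ := fun j => (s + A j) / α with hf
  have hfmono : ∀ {i j : ℤ}, i ≤ j → f i ≤ f j := by
    intro i j hij
    exact Int.ediv_le_ediv hα0 (by linarith [hA.monotone hij])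
  have hfk : ∀ k j : ℤ, f (j + k * n) = f j + k := by
    intro k j
    simp only [hf]
    rw [qper_iter hAq k j]
    rw [show s + (A j + k * α) = (s + A j) + k * (α:ℤ) by ring]
    exact Int.add_mul_ediv_right _ _ (by omega)
  have hfper : ∀ j : ℤ, f (j + (n:ℤ)) = f j + 1 := by
    intro j
    have := hfk 1 j
    rw [one_mul] at this
    omega
  have hfail : ∀ j : ℤ, (z + (XX) j ∈ Gamma α β) ↔ Bz + B j ≤ (β:ℤ) * f j := by
    intro j
    have hexp : z + (XX) j = (s + A j) * β - (Bz + B j) * α := by rw [hz]; ring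
    rw [hexp, mem_gamma_iff hα hcop]
  have hwit : ∀ i : ℤ, (z - (B (i + (n:ℤ) - 2) * α - A i * β) ∈ Gamma α β)
      ↔ Bz + B (i + (n:ℤ) - 2) ≤ (β:ℤ) * f i := by
    intro i
    have hexp : z - (B (i + (n:ℤ) - 2) * α - A i * β)
        = (s + A i) * β - (Bz + B (i + (n:ℤ) - 2)) * α := by rw [hz]; ring
    rw [hexp, mem_gamma_iff hα hcop]
  have hFsymm : ∀ j : ℤ, ((α:ℤ) * β - α - β - z - (XX) j ∈ Gamma α β) ↔ z + (XX) j ∉ Gamma α β := by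
    intro j
    have h1 := gamma_symm hα hαβ hcop (z + (XX) j)
    rw [show (α:ℤ) * β - α - β - (z + (XX) j) = (α:ℤ) * β - α - β - z - (XX) j by ring] at h1
    constructor
    · intro h2 h3; exact (h1.mp h3) h2
    · intro h2; by_contra h3; exact h2 (h1.mpr h3)
  rw [mem_dual_iff hα hαβ hcop syz_closed, hsyz]
  constructor
  · -- no two distinct failing generators → explicit witness
    intro hno
    by_contra hnw
    push_neg at hnw
    have hnw' : ∀ i : ℤ, (β:ℤ) * f i < Bz + B (i + (n:ℤ) - 2) := by
      intro i
      have := hnw i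
      rw [hwit i] at this
      omega
    have hbddP : ∃ b : ℤ, ∀ w : ℤ, (f 0 < f w) → b ≤ w := by
      refine ⟨1, fun w hw => ?_⟩
      by_contra h
      push_neg at h
      have := hfmono (show w ≤ 0 by omega)
      omega
    have hinh : ∃ w : ℤ, f 0 < f w := by
      refine ⟨(n:ℤ), ?_⟩
      have := hfper 0
      rw [zero_add] at this
      omega
    obtain ⟨j0, hj0P, hj0min⟩ := Int.exists_least_of_bdd hbddP hinh
    have hjump : f (j0 - 1) ≤ f 0 := by
      by_contra h
      push_neg at h
      have := hj0min _ h
      omega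
    have hwin : ∀ m : ℤ, j0 ≤ m → m < j0 + (n:ℤ) → f m = f j0 := by
      intro m hm1 hm2
      have h1 : f j0 ≤ f m := hfmono hm1
      have h2 : f m ≤ f (j0 + (n:ℤ) - 1) := hfmono (by omega)
      have h3 : f (j0 + (n:ℤ) - 1) = f (j0 - 1) + 1 := by
        have := hfper (j0 - 1)
        rw [show j0 - 1 + (n:ℤ) = j0 + (n:ℤ) - 1 by ring] at this
        exact this
      omega
    have hf1 : f (j0 + (n:ℤ) - 2) = f j0 := hwin _ (by omega) (by omega)
    have hf2 : f (j0 + (n:ℤ) - 1) = f j0 := hwin _ (by omega) (by omega)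
    have fail1 : ¬ (z + (XX) (j0 + (n:ℤ) - 2) ∈ Gamma α β) := by
      rw [hfail, hf1]
      have := hnw' j0
      omega
    have fail2 : ¬ (z + (XX) (j0 + (n:ℤ) - 1) ∈ Gamma α β) := by
      rw [hfail, hf2]
      have := hnw' j0
      have hBmono : B (j0 + (n:ℤ) - 2) ≤ B (j0 + (n:ℤ) - 1) := hB.monotone (by omega)
      omega
    have hne12 : (XX) (j0 + (n:ℤ) - 2) ≠ (XX) (j0 + (n:ℤ) - 1) :=
      X_window_inj hα hαβ hcop hn hA hB hAq hBq _ _ (by omega) (by omega)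
    exact hno ⟨_, _, hne12, (hFsymm _).mpr fail1, (hFsymm _).mpr fail2⟩
  · -- explicit witness → no two distinct failing generators
    rintro ⟨i₀, hw⟩
    rw [hwit i₀] at hw
    rintro ⟨i, j, hne, hFi, hFj⟩
    have hi : ¬ (Bz + B i ≤ (β:ℤ) * f i) := by
      rw [← hfail i]; exact (hFsymm i).mp hFi
    have hj : ¬ (Bz + B j ≤ (β:ℤ) * f j) := by
      rw [← hfail j]; exact (hFsymm j).mp hFj
    have main : ∀ i' : ℤ, i₀ ≤ i' → i' ≤ i₀ + (n:ℤ) - 2 →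
        ((β:ℤ) * f i' < Bz + B i') → False := by
      intro i' h1 h2 hfi'
      have c1 : (β:ℤ) * f i₀ ≤ (β:ℤ) * f i' := mul_le_mul_of_nonneg_left (hfmono h1) hβ0
      have c2 : B i' ≤ B (i₀ + (n:ℤ) - 2) := hB.monotone h2
      omega
    obtain ⟨ki, hki1, hki2⟩ := window_reduce (n := n) (by omega) i₀ i
    obtain ⟨kj, hkj1, hkj2⟩ := window_reduce (n := n) (by omega) i₀ j
    have hfi' : (β:ℤ) * f (i + ki * n) < Bz + B (i + ki * n) := by
      rw [hfk ki i, qper_iter hBq ki i, mul_add]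
      have : (β:ℤ) * ki = ki * β := by ring
      omega
    have hfj' : (β:ℤ) * f (j + kj * n) < Bz + B (j + kj * n) := by
      rw [hfk kj j, qper_iter hBq kj j, mul_add]
      have : (β:ℤ) * kj = kj * β := by ring
      omega
    have hne' : i + ki * n ≠ j + kj * n := by
      intro h
      apply hne
      have e1 : (XX) (i + ki * n) = (XX) i := X_per hα hαβ hcop hn hA hB hAq hBq ki i
      have e2 : (XX) (j + kj * n) = (XX) j := X_per hα hαβ hcop hn hA hB hAq hBq kj j
      rw [← e1, ← e2, h]
    rcases lt_or_gt_of_ne hne' with hlt | hgt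
    · exact main (i + ki * n) hki1 (by omega) hfi'
    · exact main (j + kj * n) hkj1 (by omega) hfj'

end KeyCtx

end SDS

namespace SDS

variable {α β : ℕ}

/-- extend a function on `Fin n` to a quasi-periodic function on `ℤ` -/
def extend (n : ℕ) (hn : 0 < n) (g : Fin n → ℤ) (c : ℤ) (j : ℤ) : ℤ :=
  g ⟨(j % (n:ℤ)).toNat, by
    have h1 : 0 ≤ j % (n:ℤ) := Int.emod_nonneg _ (by exact_mod_cast hn.ne')
    have h2 : j % (n:ℤ) < n := Int.emod_lt_of_pos _ (by exact_mod_cast hn)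
    omega⟩ + c * (j / (n:ℤ))

lemma extend_qper {n : ℕ} (hn : 0 < n) (g : Fin n → ℤ) (c : ℤ) :
    ∀ j, extend n hn g c (j + (n:ℤ)) = extend n hn g c j + c := by
  intro j
  have hne : (n:ℤ) ≠ 0 := by exact_mod_cast hn.ne'
  have h1 : (j + (n:ℤ)) % n = j % n := by
    have := Int.add_mul_emod_self_left (a := j) (b := (n:ℤ)) (c := 1)
    simpa using this
  have h2 : (j + (n:ℤ)) / n = j / n + 1 := by
    have := Int.add_mul_ediv_right j 1 hne
    simpa using this
  simp only [extend, h1, h2]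
  ring

lemma extend_at_fin {n : ℕ} (hn : 0 < n) (g : Fin n → ℤ) (c : ℤ) (j : Fin n) :
    extend n hn g c (j : ℤ) = g j := by
  have h1 : ((j:ℤ)) % (n:ℤ) = (j:ℤ) := Int.emod_eq_of_lt (by positivity) (by exact_mod_cast j.2)
  have h2 : ((j:ℤ)) / (n:ℤ) = 0 := Int.ediv_eq_zero_of_lt (by positivity) (by exact_mod_cast j.2)
  simp only [extend, h2, mul_zero, add_zero]
  congr 1
  exact Fin.ext (by simp [h1])

lemma extend_strictMono {n : ℕ} (hn : 0 < n) (g : Fin n → ℤ) (c : ℤ)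
    (hg : StrictMono g) (hlast : ∀ j : Fin n, g j < g ⟨0, hn⟩ + c) :
    StrictMono (extend n hn g c) := by
  have hne : (n:ℤ) ≠ 0 := by exact_mod_cast hn.ne'
  have hn0 : (0:ℤ) < (n:ℤ) := by exact_mod_cast hn
  apply strictMono_int_of_lt_succ
  intro j
  have h1 : 0 ≤ j % (n:ℤ) := Int.emod_nonneg _ hne
  have h2 : j % (n:ℤ) < n := Int.emod_lt_of_pos _ hn0
  have hj := Int.mul_ediv_add_emod j (n:ℤ)
  rcases eq_or_lt_of_le (show j % (n:ℤ) + 1 ≤ (n:ℤ) by omega) with hc | hc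
  · -- wrap around
    have hq : (j+1) / (n:ℤ) = j / n + 1 ∧ (j+1) % (n:ℤ) = 0 := by
      have := (Int.ediv_emod_unique (a := j+1) (b := (n:ℤ)) (r := 0) (q := j / n + 1) hn0).mpr
        ⟨by linarith, le_refl 0, hn0⟩
      exact ⟨this.1, this.2⟩
    simp only [extend, hq.1, hq.2]
    have hlt := hlast ⟨(j % (n:ℤ)).toNat, by omega⟩
    have : (Int.toNat 0) = 0 := rfl
    simp only [this]
    linarith [hlt]
  · -- no wrap
    have hq : (j+1) / (n:ℤ) = j / n ∧ (j+1) % (n:ℤ) = j % n + 1 := by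
      have := (Int.ediv_emod_unique (a := j+1) (b := (n:ℤ)) (r := j % n + 1) (q := j / n) hn0).mpr
        ⟨by linarith, by omega, hc⟩
      exact ⟨this.1, this.2⟩
    simp only [extend, hq.1, hq.2]
    have hmono := hg (show (⟨(j % (n:ℤ)).toNat, by omega⟩ : Fin n) < ⟨(j % n + 1).toNat, by omega⟩ by
      simp only [Fin.mk_lt_mk]; omega)
    linarith [hmono]

end SDS

namespace SDS

variable {α β : ℕ}

set_option maxHeartbeats 1000000 in
/-- From a semimodule with at least two minimal generators, construct the
quasi-periodic coordinate sequences. -/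
lemma construct (hα : 2 ≤ α) (hαβ : α < β) (hcop : Nat.Coprime α β)
    (Δ : Set ℤ) (hbdd : ∃ m : ℤ, ∀ x ∈ Δ, m ≤ x)
    (hmod : ∀ x ∈ Δ, ∀ γ ∈ Gamma α β, x + γ ∈ Δ)
    (hgen : 2 ≤ (minGenSet α β Δ).ncard) :
    ∃ (n : ℕ) (A B : ℤ → ℤ), 2 ≤ n ∧ StrictMono A ∧ StrictMono B ∧
      (∀ j, A (j + (n:ℤ)) = A j + α) ∧ (∀ j, B (j + (n:ℤ)) = B j + β) ∧
      (∀ z, z ∈ Δ ↔ ∃ j : ℤ, z - (A j * (β:ℤ) - B j * (α:ℤ)) ∈ Gamma α β) := by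
  classical
  have hα0 : (0:ℤ) < (α:ℤ) := by exact_mod_cast (by omega : 0 < α)
  have hβ0 : (0:ℤ) < (β:ℤ) := by exact_mod_cast (by omega : 0 < β)
  choose sc bc hsc0 hscα hscb using fun z : ℤ => coords_exist hα hcop z
  set E := minGenSet α β Δ with hE
  -- injectivity of the a-coordinate on E
  have hinj : Set.InjOn sc E := by
    intro x hx y hy hxy
    have hdvd : x - y = (bc y - bc x) * α := by
      have h1 := hscb x; have h2 := hscb y
      rw [hxy] at h1
      linarith
    rcases le_total x y with h | h
    · have h' : y - x = (bc x - bc y) * α + 0 * β := by linarith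
      have hmem : y - x ∈ Gamma α β := by
        rw [h']; exact mem_of_coeffs (by nlinarith) le_rfl
      exact (minGen_antichain hy hx hmem).symm
    · have h' : x - y = (bc y - bc x) * α + 0 * β := by linarith
      have hmem : x - y ∈ Gamma α β := by
        rw [h']; exact mem_of_coeffs (by nlinarith) le_rfl
      exact minGen_antichain hx hy hmem
  -- finiteness
  have hEfin : E.Finite := by
    apply Set.Finite.of_finite_image _ hinj
    exact (Set.finite_Icc (0:ℤ) α).subset
      (by rintro _ ⟨x, hx, rfl⟩; exact ⟨hsc0 x, le_of_lt (hscα x)⟩)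
  set n := E.ncard with hn
  have hn2 : 2 ≤ n := hgen
  have hn0 : 0 < n := by omega
  have hmemE : ∀ x, x ∈ hEfin.toFinset ↔ x ∈ E := fun x => hEfin.mem_toFinset
  have hcardE : hEfin.toFinset.card = n := by
    rw [hn, Set.ncard_eq_toFinset_card _ hEfin]
  have hcardT : (hEfin.toFinset.image sc).card = n := by
    rw [Finset.card_image_of_injOn
      (fun x hx y hy h => hinj ((hmemE x).mp (Finset.mem_coe.mp hx))
        ((hmemE y).mp (Finset.mem_coe.mp hy)) h), hcardE]
  set iso := (hEfin.toFinset.image sc).orderIsoOfFin hcardT with hiso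
  -- the generators in sorted order
  have hx0 : ∀ j : Fin n, ∃ x, x ∈ E ∧ sc x = ((iso j : ℤ)) := by
    intro j
    obtain ⟨x, hx, hxs⟩ := Finset.mem_image.mp (iso j).2
    exact ⟨x, (hmemE x).mp hx, hxs⟩
  choose x0 hx0E hx0s using hx0
  have hA0mono : StrictMono (fun j : Fin n => sc (x0 j)) := by
    intro j k hjk
    simp only [hx0s]
    exact_mod_cast (OrderIso.lt_iff_lt iso).mpr hjk
  have hx0inj : ∀ j k : Fin n, j ≠ k → x0 j ≠ x0 k := by
    intro j k hjk h
    rcases hjk.lt_or_gt with h' | h'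
    · exact absurd (congrArg sc h) (ne_of_lt (hA0mono h'))
    · exact absurd (congrArg sc h).symm (ne_of_lt (hA0mono h'))
  -- antichain inequalities for the b-coordinates
  have hpair : ∀ j k : Fin n, j < k →
      bc (x0 j) < bc (x0 k) ∧ bc (x0 k) < bc (x0 j) + β := by
    intro j k hjk
    have hAlt : sc (x0 j) < sc (x0 k) := hA0mono hjk
    have hAub : sc (x0 k) - sc (x0 j) < α := by
      have := hscα (x0 k); have := hsc0 (x0 j); omega
    have hne1 : x0 k ≠ x0 j := hx0inj k j (ne_of_gt hjk)
    have hne2 : x0 j ≠ x0 k := hx0inj j k (ne_of_lt hjk)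
    have hmem1 : x0 k - x0 j ∉ Gamma α β := fun h =>
      hne1 (minGen_antichain (hx0E k) (hx0E j) h)
    have hmem2 : x0 j - x0 k ∉ Gamma α β := fun h =>
      hne2 (minGen_antichain (hx0E j) (hx0E k) h)
    constructor
    · by_contra h
      push_neg at h
      apply hmem1
      have hexp : x0 k - x0 j = (sc (x0 k) - sc (x0 j)) * β - (bc (x0 k) - bc (x0 j)) * α := by
        have h1 := hscb (x0 k); have h2 := hscb (x0 j); linarith
      rw [hexp, mem_gamma_iff hα hcop,
        Int.ediv_eq_zero_of_lt (by omega) (by omega)]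
      omega
    · by_contra h
      push_neg at h
      apply hmem2
      have hexp : x0 j - x0 k = (sc (x0 j) - sc (x0 k)) * β - (bc (x0 j) - bc (x0 k)) * α := by
        have h1 := hscb (x0 k); have h2 := hscb (x0 j); linarith
      rw [hexp, mem_gamma_iff hα hcop,
        ediv_neg_one hα (by omega) (by omega)]
      omega
  have hB0mono : StrictMono (fun j : Fin n => bc (x0 j)) := fun j k hjk => (hpair j k hjk).1
  -- surjectivity onto E
  have hsurj : ∀ x ∈ E, ∃ j : Fin n, x0 j = x := by
    intro x hx
    have hxT : sc x ∈ hEfin.toFinset.image sc :=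
      Finset.mem_image.mpr ⟨x, (hmemE x).mpr hx, rfl⟩
    obtain ⟨j, hj⟩ := iso.surjective ⟨sc x, hxT⟩
    refine ⟨j, hinj (hx0E j) hx ?_⟩
    rw [hx0s j, hj]
  have hzero : ∀ j : Fin n, (⟨0, hn0⟩ : Fin n) ≤ j := by
    intro j
    rw [Fin.le_def]
    exact Nat.zero_le _
  -- the extended sequences
  have hAs : StrictMono (extend n hn0 (fun j => sc (x0 j)) α) := by
    apply extend_strictMono hn0 _ _ hA0mono
    intro j
    have h1 := hscα (x0 j)
    have h2 := hsc0 (x0 ⟨0, hn0⟩)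
    omega
  have hBs : StrictMono (extend n hn0 (fun j => bc (x0 j)) β) := by
    apply extend_strictMono hn0 _ _ hB0mono
    intro j
    rcases eq_or_lt_of_le (hzero j) with h | h
    · rw [← h]; omega
    · have := (hpair ⟨0, hn0⟩ j h).2
      omega
  have hAq := extend_qper hn0 (fun j => sc (x0 j)) (α:ℤ)
  have hBq := extend_qper hn0 (fun j => bc (x0 j)) (β:ℤ)
  have hval : ∀ jf : Fin n,
      extend n hn0 (fun j => sc (x0 j)) α (jf : ℤ) * (β:ℤ)
        - extend n hn0 (fun j => bc (x0 j)) β (jf : ℤ) * (α:ℤ) = x0 jf := by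
    intro jf
    rw [extend_at_fin, extend_at_fin]
    have := hscb (x0 jf)
    linarith
  refine ⟨n, extend n hn0 (fun j => sc (x0 j)) α, extend n hn0 (fun j => bc (x0 j)) β,
    hn2, hAs, hBs, hAq, hBq, ?_⟩
  intro z
  constructor
  · intro hz
    obtain ⟨m, hm⟩ := hbdd
    obtain ⟨g, hg, hgz⟩ := exists_minGen hα hm z hz
    obtain ⟨jf, hjf⟩ := hsurj g hg
    refine ⟨(jf : ℤ), ?_⟩
    rw [hval jf, hjf]
    exact hgz
  · rintro ⟨j, hj⟩
    obtain ⟨k, hk1, hk2⟩ := window_reduce (n := n) hn0 0 j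
    have hper := X_per hα hαβ hcop hn2 hAs hBs hAq hBq k j
    simp only [] at hper
    rw [← hper] at hj
    have hjlt : j + k * n < (n:ℤ) := by omega
    set jf : Fin n := ⟨(j + k * (n:ℤ)).toNat, by omega⟩ with hjf
    have hcast : ((jf : ℤ)) = j + k * (n:ℤ) := by
      simp only [hjf]
      omega
    rw [← hcast, hval jf] at hj
    have hmemΔ : x0 jf ∈ Δ := (hx0E jf).1
    have := hmod _ hmemΔ _ hj
    simpa using this

end SDS

/-- For an `⟨α,β⟩`-semimodule `Δ` with at least two minimal generators,
`Syz((Syz Δ)*)` is isomorphic to `Δ*`, i.e. equals a shift of `Δ*`. -/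
theorem syz_dual_syz (α β : ℕ)
    (hα : 2 ≤ α) (hαβ : α < β) (hcop : Nat.Coprime α β)
    (Δ : Set ℤ) (hne : Δ.Nonempty) (hbdd : ∃ m : ℤ, ∀ x ∈ Δ, m ≤ x)
    (hmod : ∀ x ∈ Δ, ∀ γ ∈ Gamma α β, x + γ ∈ Δ)
    (hgen : 2 ≤ (minGenSet α β Δ).ncard) :
    ∃ c : ℤ, Syz α β (dualSet α β (Syz α β Δ)) =
      (fun x => c + x) '' dualSet α β Δ := by

  obtain ⟨n, A, B, hn, hAs, hBs, hAq, hBq, hΔ⟩ :=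
    SDS.construct hα hαβ hcop Δ hbdd hmod hgen
  have hkey1 := SDS.key hα hαβ hcop hn hAs hBs hAq hBq Δ hΔ
  set A' : ℤ → ℤ := fun j => -(A (-j)) with hA'
  set B' : ℤ → ℤ := fun j => -(B ((n:ℤ) - 2 - j)) with hB'
  have hA's : StrictMono A' := by
    intro i j hij
    simp only [hA']
    have := hAs (show -j < -i by omega)
    omega
  have hB's : StrictMono B' := by
    intro i j hij
    simp only [hB']
    have := hBs (show (n:ℤ) - 2 - j < (n:ℤ) - 2 - i by omega)
    omega
  have hA'q : ∀ j, A' (j + (n:ℤ)) = A' j + α := by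
    intro j
    simp only [hA']
    have h1 := hAq (-j - (n:ℤ))
    rw [show -j - (n:ℤ) + n = -j by ring] at h1
    rw [show -(j + (n:ℤ)) = -j - n by ring]
    omega
  have hB'q : ∀ j, B' (j + (n:ℤ)) = B' j + β := by
    intro j
    simp only [hB']
    have h1 := hBq ((n:ℤ) - 2 - j - n)
    rw [show (n:ℤ) - 2 - j - n + n = (n:ℤ) - 2 - j by ring] at h1
    rw [show (n:ℤ) - 2 - (j + n) = (n:ℤ) - 2 - j - n by ring]
    omega
  have hcomp2 : ∀ i : ℤ, A' (-i) * (β:ℤ) - B' (-i) * (α:ℤ)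
      = B (i + (n:ℤ) - 2) * α - A i * β := by
    intro i
    simp only [hA', hB', neg_neg]
    rw [show (n:ℤ) - 2 - -i = i + (n:ℤ) - 2 by ring]
    ring
  have hΔ' : ∀ z, z ∈ dualSet α β (Syz α β Δ) ↔
      ∃ j : ℤ, z - (A' j * (β:ℤ) - B' j * (α:ℤ)) ∈ Gamma α β := by
    intro z
    rw [hkey1 z]
    constructor
    · rintro ⟨i, hi⟩
      exact ⟨-i, by rw [hcomp2 i]; exact hi⟩
    · rintro ⟨j, hj⟩
      have h := hcomp2 (-j)
      simp only [neg_neg] at h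
      exact ⟨-j, by rw [← h]; exact hj⟩
  have hkey2 := SDS.key hα hαβ hcop hn hA's hB's hA'q hB'q
    (dualSet α β (Syz α β Δ)) hΔ'
  have hcomp3 : ∀ i : ℤ, B' (i + (n:ℤ) - 2) * (α:ℤ) - A' i * (β:ℤ)
      = A (-i) * β - B (-i) * α := by
    intro i
    simp only [hA', hB']
    rw [show (n:ℤ) - 2 - (i + (n:ℤ) - 2) = -i by ring]
    ring
  have hfinal : dualSet α β (Syz α β (dualSet α β (Syz α β Δ))) = Δ := by
    ext z
    rw [hkey2 z, hΔ z]
    constructor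
    · rintro ⟨i, hi⟩
      rw [hcomp3 i] at hi
      exact ⟨-i, hi⟩
    · rintro ⟨j, hj⟩
      refine ⟨-j, ?_⟩
      rw [hcomp3 (-j)]
      simpa using hj
  refine ⟨0, ?_⟩
  have himg : (fun x => (0:ℤ) + x) '' dualSet α β Δ = dualSet α β Δ := by
    ext w
    simp
  rw [himg]
  calc Syz α β (dualSet α β (Syz α β Δ))
      = dualSet α β (dualSet α β (Syz α β (dualSet α β (Syz α β Δ)))) :=
        (SDS.dual_dual hα hαβ hcop SDS.syz_closed).symm
    _ = dualSet α β Δ := by rw [hfinal]
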